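/- Let R be a semiartinian von Neumann regular ring with primitive factors artinian, of countable Loewy length, such that each intermediate layer S_{α+1}/S_α (0 < α < σ) is a countably generated module. Then R is right (and left) hereditary, i.e., every right ideal of R is projective. -/

import Mathlib

universe u

open Submodule

/-- The socle of a module: the supremum of all simple submodules. -/
noncomputable def socle (R : Type u) [Ring R] (M : Type u) [AddCommGroup M] [Module R M] :
    Submodule R M :=
  sSup {S : Submodule R M | IsAtom S}

/-- The Loewy (socle) sequence of a module, defined by transfinite recursion:
`loewy R M 0 = ⊥`, `loewy R M (α+1) / loewy R M α = Soc (M ⧸ loewy R M α)`, and unions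
at limit ordinals. -/
noncomputable def loewy (R : Type u) [Ring R] (M : Type u) [AddCommGroup M] [Module R M]
    (o : Ordinal.{u}) : Submodule R M :=
  o.limitRecOn ⊥ (fun _ N => (socle R (M ⧸ N)).comap N.mkQ)
    (fun o _ IH => ⨆ (b : Ordinal) (h : b < o), IH b h)

/-- The Loewy length of a module: the least ordinal `o` with `loewy R M o = ⊤`. -/
noncomputable def loewyLength (R : Type u) [Ring R] (M : Type u) [AddCommGroup M]
    [Module R M] : Ordinal.{u} :=
  sInf {o : Ordinal | loewy R M o = ⊤}

/-- A ring is semiartinian if every nonzero module has a nonzero socle. -/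
def IsSemiartinianRing (R : Type u) [Ring R] : Prop :=
  ∀ (M : Type u) [AddCommGroup M] [Module R M], Nontrivial M → socle R M ≠ ⊥

/-- A ring is von Neumann regular if for every `r` there is `s` with `r * s * r = r`. -/
def IsVonNeumannRegularRing (R : Type u) [Ring R] : Prop :=
  ∀ r : R, ∃ s : R, r * s * r = r

/-- `R` has primitive factors artinian: for every primitive ideal `P` (= annihilator of a
simple module), the factor `R/P` is artinian. -/
def HasPrimitiveFactorsArtinian (R : Type u) [Ring R] : Prop :=
  ∀ (M : Type u) [AddCommGroup M] [Module R M], IsSimpleModule R M →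
    IsArtinian R (R ⧸ (Module.annihilator R M : Submodule R R))

/-- The `α`-th layer of the Loewy sequence of `R`, as a submodule of `R ⧸ loewy R R α`. -/
noncomputable def loewyLayer (R : Type u) [Ring R] (α : Ordinal.{u}) :
    Submodule R (R ⧸ loewy R R α) :=
  (loewy R R (α + 1)).map (loewy R R α).mkQ

/-- The canonical projection `π_α : S_{α+1} → S_{α+1}/S_α`. -/
noncomputable def layerProj (R : Type u) [Ring R] (α : Ordinal.{u}) :
    (loewy R R (α + 1) : Submodule R R) →ₗ[R] (loewyLayer R α) :=
  LinearMap.codRestrict _ ((loewy R R α).mkQ.comp (loewy R R (α + 1)).subtype)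
    (fun x => ⟨(x : R), x.2, rfl⟩)

/-- `M` is weakly `R`-projective: every homomorphism from `M` to a layer `S_{α+1}/S_α`
(`0 < α`) with finitely generated image factors through `π_α : S_{α+1} → S_{α+1}/S_α`. -/
def IsWeaklyRProjective (R : Type u) [Ring R] (M : Type u) [AddCommGroup M]
    [Module R M] : Prop :=
  ∀ α : Ordinal.{u}, 0 < α →
    ∀ φ : M →ₗ[R] (loewyLayer R α), (LinearMap.range φ).FG →
      ∃ ψ : M →ₗ[R] (loewy R R (α + 1) : Submodule R R), (layerProj R α).comp ψ = φ

/-- `M` is layer projective: for each `0 < α`, every simple submodule of the `α`-th layer of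
`M` is isomorphic to a simple (direct summand) submodule of the `α`-th layer of `R`, i.e. the
`α`-th layer of `M` is a projective `R/S_α`-module. -/
def IsLayerProjective (R : Type u) [Ring R] (M : Type u) [AddCommGroup M]
    [Module R M] : Prop :=
  ∀ α : Ordinal.{u}, 0 < α →
    ∀ T : Submodule R ((loewy R M (α + 1)).map (loewy R M α).mkQ), IsAtom T →
      ∃ T' : Submodule R (loewyLayer R α), IsAtom T' ∧ Nonempty (T ≃ₗ[R] T')

/-- The submodule `M·S` of `M`, generated by all products `s • m` with `s ∈ S`. -/
def smulSub (R : Type u) [Ring R] (M : Type u) [AddCommGroup M] [Module R M]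
    (S : Submodule R R) : Submodule R M :=
  Submodule.span R {x : M | ∃ s ∈ S, ∃ m : M, s • m = x}

/-! ### Auxiliary lemmas -/

section LoewyBasic

variable {R : Type u} [Ring R] (M : Type u) [AddCommGroup M] [Module R M]

theorem loewy_zero : loewy R M 0 = ⊥ :=
  Ordinal.limitRecOn_zero _ _ _

theorem loewy_succ (o : Ordinal.{u}) :
    loewy R M (o + 1) = (socle R (M ⧸ loewy R M o)).comap (loewy R M o).mkQ := by
  rw [loewy, Ordinal.add_one_eq_succ, Ordinal.limitRecOn_succ]
  rfl

theorem loewy_limit (o : Ordinal.{u}) (h : Order.IsSuccLimit o) :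
    loewy R M o = ⨆ (b : Ordinal) (_ : b < o), loewy R M b := by
  rw [loewy, Ordinal.limitRecOn_limit _ _ _ _ h]
  rfl

theorem loewy_le_succ (o : Ordinal.{u}) : loewy R M o ≤ loewy R M (o + 1) := by
  rw [loewy_succ]
  intro x hx
  simp only [mem_comap, Submodule.mkQ_apply]
  have : ((Submodule.Quotient.mk x : M ⧸ loewy R M o)) = 0 :=
    (Submodule.Quotient.mk_eq_zero _).2 hx
  rw [this]; exact zero_mem _

theorem loewy_mono : Monotone (loewy R M) := by
  intro a b hab
  induction b using Ordinal.induction with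
  | h b IH =>
    rcases eq_or_lt_of_le hab with rfl | hlt
    · exact le_rfl
    rcases Ordinal.zero_or_succ_or_isSuccLimit b with rfl | ⟨c, rfl⟩ | hl
    · exact absurd hlt (by simp)
    · have h1 : loewy R M (Order.succ c) = loewy R M (c + 1) := by
        rw [Ordinal.add_one_eq_succ]
      rw [h1]
      exact (IH c (Order.lt_succ c) (Order.lt_succ_iff.mp hlt)).trans (loewy_le_succ M c)
    · rw [loewy_limit M b hl]
      exact le_iSup_of_le a (le_iSup_of_le hlt le_rfl)

theorem loewy_eq_top_of_le {o o' : Ordinal.{u}} (h : loewy R M o = ⊤) (ho : o ≤ o') :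
    loewy R M o' = ⊤ :=
  top_unique (h ▸ loewy_mono M ho)

end LoewyBasic

section Regular

variable {R : Type u} [Ring R]

theorem mul_mem_span_idem {e x : R} (he : IsIdempotentElem e) (hx : x ∈ span R {e}) :
    x * e = x := by
  obtain ⟨r, rfl⟩ := mem_span_singleton.mp hx
  show r * e * e = r * e
  rw [mul_assoc, he.eq]

theorem span_singleton_idem (hvnr : IsVonNeumannRegularRing R) (a : R) :
    ∃ e : R, IsIdempotentElem e ∧ span R {e} = span R {a} := by
  obtain ⟨s, hs⟩ := hvnr a
  refine ⟨s * a, ?_, le_antisymm ?_ ?_⟩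
  · show s * a * (s * a) = s * a
    rw [mul_assoc s a (s * a), ← mul_assoc a s a, hs]
  · rw [span_le, Set.singleton_subset_iff]
    exact SetLike.mem_coe.mpr (mem_span_singleton.mpr ⟨s, rfl⟩)
  · rw [span_le, Set.singleton_subset_iff]
    refine SetLike.mem_coe.mpr (mem_span_singleton.mpr ⟨a, ?_⟩)
    show a * (s * a) = a
    rw [← mul_assoc, hs]

theorem span_pair_idem (hvnr : IsVonNeumannRegularRing R) {e f : R}
    (he : IsIdempotentElem e) (hf : IsIdempotentElem f) :
    ∃ h : R, IsIdempotentElem h ∧ span R {h} = span R {e} ⊔ span R {f} := by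
  obtain ⟨g', hg'idem, hg'span⟩ := span_singleton_idem hvnr (f - f * e)
  have hg'mem : g' ∈ span R (({f - f * e} : Set R)) := hg'span ▸ mem_span_singleton_self _
  obtain ⟨x, hx⟩ := mem_span_singleton.mp hg'mem
  have hx' : x * (f - f * e) = g' := hx
  have hg'e : g' * e = 0 := by
    rw [← hx', mul_assoc, sub_mul, mul_assoc f e e, he.eq, sub_self, mul_zero]
  set h : R := e + g' - e * g' with hh
  have heh : e * h = e := by
    rw [hh, mul_sub, mul_add, he.eq, ← mul_assoc, he.eq]; abel
  have hg'h : g' * h = g' := by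
    rw [hh, mul_sub, mul_add, hg'idem.eq, ← mul_assoc, hg'e, zero_mul]
    simp
  have hidem : IsIdempotentElem h := by
    show _ * _ = _
    have step : h * h = e * h + g' * h - e * g' * h := by
      conv_lhs => rw [hh]
      rw [sub_mul, add_mul]
    rw [step, heh, hg'h, mul_assoc, hg'h]
  have hsub : span R {g'} ≤ span R {e} ⊔ span R {f} := by
    rw [span_le, Set.singleton_subset_iff, SetLike.mem_coe, ← hx']
    have : x * (f - f * e) = x * f - (x * f) * e := by rw [mul_sub, mul_assoc]
    rw [this]
    exact sub_mem (le_sup_right (α := Submodule R R) (mem_span_singleton.mpr ⟨x, rfl⟩))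
      (le_sup_left (α := Submodule R R) (mem_span_singleton.mpr ⟨x * f, rfl⟩))
  have hespan : span R {e} ≤ span R {h} := by
    rw [span_le, Set.singleton_subset_iff, SetLike.mem_coe]
    exact mem_span_singleton.mpr ⟨e, heh⟩
  have hg'span2 : span R {g'} ≤ span R {h} := by
    rw [span_le, Set.singleton_subset_iff, SetLike.mem_coe]
    exact mem_span_singleton.mpr ⟨g', hg'h⟩
  refine ⟨h, hidem, le_antisymm ?_ (sup_le hespan ?_)⟩
  · rw [span_le, Set.singleton_subset_iff, SetLike.mem_coe, hh]
    refine sub_mem (add_mem ?_ (hsub (mem_span_singleton_self g'))) ?_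
    · exact le_sup_left (α := Submodule R R) (mem_span_singleton_self e)
    · exact hsub (mem_span_singleton.mpr ⟨e, rfl⟩)
  · rw [span_le, Set.singleton_subset_iff, SetLike.mem_coe]
    have h1 : f - f * e ∈ span R {h} := by
      rw [hg'span] at hg'span2
      exact hg'span2 (mem_span_singleton_self _)
    have h2 : f * e ∈ span R {h} := by
      refine hespan ?_
      exact mem_span_singleton.mpr ⟨f, rfl⟩
    have := add_mem h2 h1
    simpa using this

theorem fg_span_idem (hvnr : IsVonNeumannRegularRing R) (N : Submodule R R) (hN : N.FG) :
    ∃ e : R, IsIdempotentElem e ∧ span R {e} = N := by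
  refine Submodule.fg_induction (motive := fun N _ => ∃ e : R, IsIdempotentElem e ∧ span R {e} = N)
    ?_ ?_ N hN
  · intro x
    exact span_singleton_idem hvnr x
  · rintro p q _ _ ⟨e, he, rfl⟩ ⟨f, hf, rfl⟩
    exact span_pair_idem hvnr he hf

theorem projective_span_idem (e : R) (he : IsIdempotentElem e) :
    Module.Projective R (span R {e} : Submodule R R) := by
  refine Module.Projective.of_split (M := R) (span R {e}).subtype
    (LinearMap.codRestrict _ (LinearMap.toSpanSingleton R R e) ?_) ?_
  · intro r
    exact smul_mem _ r (mem_span_singleton_self e)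
  · apply LinearMap.ext
    rintro ⟨x, hx⟩
    refine Subtype.ext ?_
    exact mul_mem_span_idem he hx

theorem atom_projective (hvnr : IsVonNeumannRegularRing R) {T : Submodule R R}
    (hT : IsAtom T) : Module.Projective R T := by
  obtain ⟨t, htT, ht0⟩ := (Submodule.ne_bot_iff T).mp hT.1
  have hspan : span R {t} = T := by
    rcases lt_or_eq_of_le ((span_le).mpr (Set.singleton_subset_iff.mpr htT)) with hlt | heq
    · exact absurd (hT.2 _ hlt) (by simpa [span_singleton_eq_bot] using ht0)
    · exact heq
  obtain ⟨e, he, hespan⟩ := span_singleton_idem hvnr t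
  have h2 : span R {e} = T := hespan.trans hspan
  exact h2 ▸ projective_span_idem e he

/-- A countably generated left ideal of a von Neumann regular ring is projective. -/
theorem projective_of_range_span (hvnr : IsVonNeumannRegularRing R)
    (C : Submodule R R) (g : ℕ → R) (hg : span R (Set.range g) = C) :
    Module.Projective R C := by
  classical
  set Cn : ℕ → Submodule R R := fun n => span R (g '' Set.Iio n) with hCn
  have hCn_mono : Monotone Cn := fun m n hmn =>
    span_mono (Set.image_mono (Set.Iio_subset_Iio (by exact_mod_cast hmn)))
  have hCn_le : ∀ n, Cn n ≤ C := fun n => hg ▸ span_mono (Set.image_subset_range g _)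
  have hmem : ∀ x : R, x ∈ C → ∃ N, x ∈ Cn N := by
    intro x hx
    have hU : (⋃ n, g '' Set.Iio n) = Set.range g := by
      ext y
      simp only [Set.mem_iUnion, Set.mem_image, Set.mem_range, Set.mem_Iio]
      constructor
      · rintro ⟨n, m, _, rfl⟩; exact ⟨m, rfl⟩
      · rintro ⟨i, rfl⟩; exact ⟨i + 1, i, Nat.lt_succ_self i, rfl⟩
    have hC' : C = ⨆ n, Cn n := by
      rw [← hg, hCn, ← span_iUnion, hU]
    rw [hC'] at hx
    exact (Submodule.mem_iSup_of_chain ⟨Cn, hCn_mono⟩ x).mp hx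
  choose E hEidem hEspan using fun n =>
    fg_span_idem hvnr (Cn n) (fg_span ((Set.finite_Iio n).image g))
  set e : ℕ → R := fun n => Nat.rec 0 (fun n en => en + E (n + 1) - E (n + 1) * en) n with he
  have he0 : e 0 = 0 := rfl
  have hestep : ∀ n, e (n + 1) = e n + E (n + 1) - E (n + 1) * e n := fun n => rfl
  have combine : ∀ a b : R, IsIdempotentElem a → IsIdempotentElem b → a * b = a →
      IsIdempotentElem (a + b - b * a) ∧ span R {a + b - b * a} = span R {b} ∧
        (a + b - b * a) * a = a ∧ a * (a + b - b * a) = a := by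
    intro a b ha hb hab
    have hah : a * (a + b - b * a) = a := by
      rw [mul_sub, mul_add, ha.eq, hab, ← mul_assoc, hab, ha.eq]; abel
    have hbh : b * (a + b - b * a) = b := by
      rw [mul_sub, mul_add, hb.eq, ← mul_assoc, hb.eq]; abel
    have hha : (a + b - b * a) * a = a := by
      rw [sub_mul, add_mul, ha.eq, mul_assoc, ha.eq]; abel
    have hhb : (a + b - b * a) * b = a + b - b * a := by
      rw [sub_mul, add_mul, hab, hb.eq, mul_assoc, hab]
    have hidem : IsIdempotentElem (a + b - b * a) := by
      show _ * _ = _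
      rw [sub_mul, add_mul, hah, mul_assoc, hah, hbh]
    refine ⟨hidem, le_antisymm ?_ ?_, hha, hah⟩
    · rw [span_le, Set.singleton_subset_iff, SetLike.mem_coe]
      exact mem_span_singleton.mpr ⟨a + b - b * a, hhb⟩
    · rw [span_le, Set.singleton_subset_iff, SetLike.mem_coe]
      exact mem_span_singleton.mpr ⟨b, hbh⟩
  have key : ∀ n, IsIdempotentElem (e n) ∧ span R {e n} = Cn n := by
    intro n
    induction n with
    | zero =>
      refine ⟨by simp [he0, IsIdempotentElem], ?_⟩
      rw [he0, span_zero_singleton, hCn]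
      simp [Set.Iio]
    | succ n ih =>
      have hab : e n * E (n + 1) = e n :=
        mul_mem_span_idem (hEidem (n + 1))
          (by rw [hEspan]; exact hCn_mono (Nat.le_succ n) (ih.2 ▸ mem_span_singleton_self _))
      obtain ⟨h1, h2, _, _⟩ := combine _ _ ih.1 (hEidem (n + 1)) hab
      rw [hestep n]
      exact ⟨h1, h2.trans (hEspan (n + 1))⟩
  have hrel : ∀ n, e n * e (n + 1) = e n ∧ e (n + 1) * e n = e n := by
    intro n
    have hab : e n * E (n + 1) = e n :=
      mul_mem_span_idem (hEidem (n + 1))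
        (by rw [hEspan]; exact hCn_mono (Nat.le_succ n) ((key n).2 ▸ mem_span_singleton_self _))
    obtain ⟨_, _, h3, h4⟩ := combine _ _ (key n).1 (hEidem (n + 1)) hab
    rw [hestep n]
    exact ⟨h4, h3⟩
  have hmul : ∀ n (x : R), x ∈ Cn n → x * e n = x := fun n x hx =>
    mul_mem_span_idem (key n).1 ((key n).2 ▸ hx)
  have heC : ∀ n, e n ∈ C := fun n => hCn_le n ((key n).2 ▸ mem_span_singleton_self _)
  have hfC : ∀ n, e (n + 1) - e n ∈ C := fun n => sub_mem (heC (n + 1)) (heC n)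
  set cf : ℕ → C := fun n => ⟨e (n + 1) - e n, hfC n⟩ with hcf
  have hfin : ∀ x : C, (Function.support fun n => (x : R) * (e (n + 1) - e n)).Finite := by
    rintro ⟨x, hx⟩
    obtain ⟨N, hN⟩ := hmem x hx
    refine Set.Finite.subset (Set.finite_Iio N) ?_
    intro n hn
    simp only [Function.mem_support] at hn
    by_contra hnN
    have hNn : N ≤ n := le_of_not_gt (by simpa using hnN)
    have h1 : x * e n = x := hmul n x (hCn_mono hNn hN)
    have h2 : x * e (n + 1) = x := hmul (n + 1) x (hCn_mono (hNn.trans (Nat.le_succ n)) hN)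
    exact hn (by rw [mul_sub, h1, h2, sub_self])
  set sfun : C → (ℕ →₀ R) := fun x =>
    Finsupp.ofSupportFinite (fun n => (x : R) * (e (n + 1) - e n)) (hfin x) with hsfun
  have hsfun_apply : ∀ (x : C) (n : ℕ), sfun x n = (x : R) * (e (n + 1) - e n) := fun x n => rfl
  set s : C →ₗ[R] (ℕ →₀ R) :=
    { toFun := sfun
      map_add' := by
        intro x y
        apply Finsupp.ext
        intro n
        simp only [hsfun_apply, Finsupp.add_apply, Submodule.coe_add, add_mul]
      map_smul' := by
        intro r x
        apply Finsupp.ext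
        intro n
        simp only [hsfun_apply, Finsupp.smul_apply, SetLike.val_smul, smul_eq_mul,
          RingHom.id_apply, mul_assoc] } with hs
  have hsapp : ∀ (x : C) (n : ℕ), s x n = (x : R) * (e (n + 1) - e n) := fun x n => rfl
  have hsplit : (Finsupp.linearCombination R cf).comp s = LinearMap.id := by
    apply LinearMap.ext
    rintro ⟨x, hx⟩
    apply Subtype.ext
    obtain ⟨N, hN⟩ := hmem x hx
    have hcoe : ((Finsupp.linearCombination R cf) (s ⟨x, hx⟩) : R)
        = ∑ n ∈ (s ⟨x, hx⟩).support, (s ⟨x, hx⟩) n * (e (n + 1) - e n) := by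
      rw [Finsupp.linearCombination_apply, Finsupp.sum, AddSubmonoidClass.coe_finset_sum]
      exact Finset.sum_congr rfl fun n _ => rfl
    have hsub : (s ⟨x, hx⟩).support ⊆ Finset.range N := by
      intro n hn
      rw [Finsupp.mem_support_iff] at hn
      rw [Finset.mem_range]
      by_contra hnN
      have hNn : N ≤ n := le_of_not_gt hnN
      refine hn ?_
      rw [hsapp]
      rw [mul_sub, hmul n x (hCn_mono hNn hN),
        hmul (n + 1) x (hCn_mono (hNn.trans (Nat.le_succ n)) hN), sub_self]
    have hterm : ∀ n, (s ⟨x, hx⟩) n * (e (n + 1) - e n) = x * (e (n + 1) - e n) := by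
      intro n
      have hid : (e (n + 1) - e n) * (e (n + 1) - e n) = e (n + 1) - e n := by
        have h1 : (e (n + 1) - e n) * e (n + 1) = e (n + 1) - e n := by
          rw [sub_mul, (key (n + 1)).1.eq, (hrel n).1]
        have h2 : (e (n + 1) - e n) * e n = 0 := by
          rw [sub_mul, (hrel n).2, (key n).1.eq, sub_self]
        rw [mul_sub, h1, h2, sub_zero]
      rw [hsapp, mul_assoc, hid]
    show ((Finsupp.linearCombination R cf) (s ⟨x, hx⟩) : R) = x
    rw [hcoe]
    calc ∑ n ∈ (s ⟨x, hx⟩).support, (s ⟨x, hx⟩) n * (e (n + 1) - e n)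
        = ∑ n ∈ (s ⟨x, hx⟩).support, x * (e (n + 1) - e n) :=
          Finset.sum_congr rfl fun n _ => hterm n
      _ = ∑ n ∈ Finset.range N, x * (e (n + 1) - e n) := by
          refine Finset.sum_subset hsub fun n _ hn => ?_
          rw [Finsupp.notMem_support_iff] at hn
          have := hsapp ⟨x, hx⟩ n
          rw [hn] at this
          exact this.symm
      _ = ∑ n ∈ Finset.range N, (x * e (n + 1) - x * e n) :=
          Finset.sum_congr rfl fun n _ => mul_sub x _ _
      _ = x * e N - x * e 0 := Finset.sum_range_sub (fun n => x * e n) N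
      _ = x := by rw [he0, mul_zero, sub_zero, hmul N x hN]
  exact Module.Projective.of_split s (Finsupp.linearCombination R cf) hsplit

end Regular

section Semisimple

variable {R : Type u} [Ring R]

theorem isAtom_map_subtype {M : Type u} [AddCommGroup M] [Module R M]
    {p : Submodule R M} {T : Submodule R p} (hT : IsAtom T) :
    IsAtom (T.map p.subtype) := by
  have hinj := Submodule.map_injective_of_injective (injective_subtype p)
  constructor
  · intro hbot
    exact hT.1 (hinj (by rw [hbot, Submodule.map_bot]))
  · intro b hb
    have hble : b ≤ T.map p.subtype := le_of_lt hb
    set b' : Submodule R p := b.comap p.subtype with hb'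
    have hmapb' : b'.map p.subtype = b := by
      rw [hb', Submodule.map_comap_eq, Submodule.range_subtype]
      exact inf_eq_right.mpr (hble.trans (map_subtype_le p T))
    have hb'T : b' ≤ T := by
      intro x hx
      have hxb : (x : M) ∈ b := hx
      have hxm : (x : M) ∈ T.map p.subtype := hble hxb
      obtain ⟨y, hy, hyx⟩ := hxm
      have : y = x := Subtype.ext hyx
      rwa [← this]
    rcases lt_or_eq_of_le hb'T with hlt | heq
    · rw [← hmapb', hT.2 b' hlt, Submodule.map_bot]
    · exfalso
      rw [← hmapb', heq] at hb
      exact lt_irrefl _ hb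

theorem isAtom_comap_subtype {M : Type u} [AddCommGroup M] [Module R M]
    {p : Submodule R M} {T : Submodule R M} (hT : IsAtom T) (hTp : T ≤ p) :
    IsAtom (T.comap p.subtype) := by
  have hinj := Submodule.map_injective_of_injective (injective_subtype p)
  have hmap : (T.comap p.subtype).map p.subtype = T := by
    rw [Submodule.map_comap_eq, Submodule.range_subtype]
    exact inf_eq_right.mpr hTp
  constructor
  · intro hbot
    rw [hbot, Submodule.map_bot] at hmap
    exact hT.1 hmap.symm
  · intro b hb
    apply hinj
    rw [Submodule.map_bot]
    refine hT.2 _ ?_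
    rw [← hmap]
    exact lt_of_le_of_ne (Submodule.map_mono (le_of_lt hb))
      (fun h => (ne_of_lt hb) (hinj h))

/-- The sSup of all atoms, as a module, is semisimple. -/
theorem isSemisimple_sSup_atoms (M : Type u) [AddCommGroup M] [Module R M] :
    IsSemisimpleModule R (sSup {T : Submodule R M | IsAtom T} : Submodule R M) := by
  set S : Submodule R M := sSup {T : Submodule R M | IsAtom T} with hS
  refine IsSemisimpleModule.of_sSup_simples_eq_top ?_
  simp_rw [isSimpleModule_iff_isAtom]
  have hinj := Submodule.map_injective_of_injective (injective_subtype S)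
  apply hinj
  rw [Submodule.map_subtype_top]
  apply le_antisymm
  · rw [sSup_eq_iSup']
    rw [Submodule.map_iSup]
    exact iSup_le fun T => map_subtype_le S _
  · conv_lhs => rw [hS]
    refine sSup_le fun T hT => ?_
    have hTS : T ≤ S := le_sSup hT
    have hmap : (T.comap S.subtype).map S.subtype = T := by
      rw [Submodule.map_comap_eq, Submodule.range_subtype]
      exact inf_eq_right.mpr hTS
    rw [← hmap]
    refine Submodule.map_mono ?_
    exact le_sSup (isAtom_comap_subtype hT hTS)

/-- A semisimple module all of whose simple submodules are projective is projective. -/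
theorem projective_of_semisimple_atoms (M : Type u) [AddCommGroup M] [Module R M]
    [IsSemisimpleModule R M]
    (h : ∀ T : Submodule R M, IsAtom T → Module.Projective R T) :
    Module.Projective R M := by
  classical
  obtain ⟨s, hind, hsup, hsimple⟩ := IsSemisimpleModule.exists_sSupIndep_sSup_simples_eq_top R M
  have hind' : iSupIndep ((↑) : s → Submodule R M) := (sSupIndep_iff s).mp hind
  have hsup' : ⨆ i : s, (i : Submodule R M) = ⊤ := by rw [← sSup_eq_iSup', hsup]
  have hint : DirectSum.IsInternal ((↑) : s → Submodule R M) :=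
    DirectSum.isInternal_submodule_of_iSupIndep_of_iSup_eq_top hind' hsup'
  have hproj : ∀ i : s, Module.Projective R (i : Submodule R M) := fun i =>
    h i (isSimpleModule_iff_isAtom.mp (hsimple i i.2))
  haveI : ∀ i : s, Module.Projective R ↥(Subtype.val i) := hproj
  haveI : Module.Projective R (Π₀ (i : s), ↥(Subtype.val i)) := inferInstance
  exact Module.Projective.of_equiv (M := Π₀ (i : s), ↥(Subtype.val i))
    (LinearEquiv.ofBijective (DirectSum.coeLinearMap _) hint)

/-- Every submodule of a countably generated semisimple module is countably generated. -/
theorem cg_submodule_of_semisimple {M : Type u} [AddCommGroup M] [Module R M]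
    [IsSemisimpleModule R M] {G : Set M} (hGc : G.Countable) (hG : span R G = ⊤)
    (N : Submodule R M) : ∃ G' : Set M, G'.Countable ∧ span R G' = N := by
  obtain ⟨q, hq⟩ := exists_isCompl N
  set e := Submodule.quotientEquivOfIsCompl q N hq.symm with he
  set f : M →ₗ[R] M := N.subtype ∘ₗ (e.toLinearMap) ∘ₗ q.mkQ with hf
  refine ⟨f '' G, hGc.image f, ?_⟩
  rw [Submodule.span_image, hG, Submodule.map_top]
  rw [hf, LinearMap.range_comp, LinearMap.range_comp, Submodule.range_mkQ, Submodule.map_top,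
    LinearEquiv.range, Submodule.map_top, Submodule.range_subtype]

theorem comap_mkQ_bot_socle (M : Type u) [AddCommGroup M] [Module R M] :
    (socle R (M ⧸ (⊥ : Submodule R M))).comap (⊥ : Submodule R M).mkQ
      = sSup {T : Submodule R M | IsAtom T} := by
  set e : (M ⧸ (⊥ : Submodule R M)) ≃ₗ[R] M := Submodule.quotEquivOfEqBot ⊥ rfl with he
  have hmk : ∀ y : M ⧸ (⊥ : Submodule R M), (⊥ : Submodule R M).mkQ (e y) = y := by
    intro y
    have h2 := Submodule.quotEquivOfEqBot_symm_apply (⊥ : Submodule R M) rfl (e y)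
    rw [Submodule.mkQ_apply, ← h2, LinearEquiv.symm_apply_apply]
  have hcomap : ∀ T : Submodule R (M ⧸ (⊥ : Submodule R M)),
      T.comap (⊥ : Submodule R M).mkQ = T.map (e : M ⧸ (⊥ : Submodule R M) →ₗ[R] M) := by
    intro T
    ext x
    simp only [mem_comap, mem_map]
    constructor
    · intro hx
      refine ⟨(⊥ : Submodule R M).mkQ x, hx, ?_⟩
      show e ((⊥ : Submodule R M).mkQ x) = x
      exact Submodule.quotEquivOfEqBot_apply_mk (⊥ : Submodule R M) rfl x
    · rintro ⟨y, hy, rfl⟩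
      show (⊥ : Submodule R M).mkQ (e y) ∈ T
      rwa [hmk y]
  set u := Submodule.orderIsoMapComap (e : (M ⧸ (⊥ : Submodule R M)) ≃ₗ[R] M) with hu
  have himg : u '' {T : Submodule R (M ⧸ (⊥ : Submodule R M)) | IsAtom T}
      = {T : Submodule R M | IsAtom T} := by
    ext T
    simp only [Set.mem_image, Set.mem_setOf_eq]
    constructor
    · rintro ⟨T', hT', rfl⟩
      exact (u.isAtom_iff T').mpr hT'
    · intro hT
      refine ⟨u.symm T, ?_, u.apply_symm_apply T⟩
      rw [← u.isAtom_iff (u.symm T), u.apply_symm_apply]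
      exact hT
  rw [hcomap]
  show u (socle R _) = _
  rw [socle, map_sSup, himg]

theorem isSemisimple_of_le_sSup_atoms {M : Type u} [AddCommGroup M] [Module R M]
    {A : Submodule R M} (h : A ≤ sSup {T : Submodule R M | IsAtom T}) :
    IsSemisimpleModule R A := by
  haveI := isSemisimple_sSup_atoms (R := R) M
  exact IsSemisimpleModule.congr (Submodule.comapSubtypeEquivOfLe h).symm

end Semisimple

section Layers

variable {R : Type u} [Ring R]

theorem loewyLayer_eq_socle (α : Ordinal.{u}) :
    loewyLayer R α = socle R (R ⧸ loewy R R α) := by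
  rw [loewyLayer, loewy_succ, Submodule.map_comap_eq, Submodule.range_mkQ, top_inf_eq]

theorem loewy_one_eq_sSup_atoms :
    loewy R R 1 = sSup {T : Submodule R R | IsAtom T} := by
  have h1 : (1 : Ordinal.{u}) = 0 + 1 := (zero_add 1).symm
  rw [h1, loewy_succ, loewy_zero]
  exact comap_mkQ_bot_socle R

/-- Every submodule of a Loewy layer (for `0 < γ ≤ σ`) is countably generated. -/
theorem layer_submodule_cg (σ : Ordinal.{u})
    (hlen : loewy R R (σ + 1) = ⊤)
    (hlayers : ∀ α : Ordinal.{u}, 0 < α → α < σ →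
      ∃ S : Set (loewyLayer R α), S.Countable ∧ Submodule.span R S = ⊤)
    {γ : Ordinal.{u}} (hγ0 : 0 < γ) (hγσ : γ ≤ σ)
    (N : Submodule R (R ⧸ loewy R R γ)) (hN : N ≤ loewyLayer R γ) :
    ∃ G : Set (R ⧸ loewy R R γ), G.Countable ∧ span R G = N := by
  rcases lt_or_eq_of_le hγσ with hlt | rfl
  · obtain ⟨S0, hS0c, hS0⟩ := hlayers γ hγ0 hlt
    haveI : IsSemisimpleModule R ↥(loewyLayer R γ) := by
      rw [loewyLayer_eq_socle, socle]
      exact isSemisimple_sSup_atoms _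
    obtain ⟨G', hG'c, hG'⟩ := cg_submodule_of_semisimple hS0c hS0
      (N.comap (loewyLayer R γ).subtype)
    refine ⟨(loewyLayer R γ).subtype '' G', hG'c.image _, ?_⟩
    rw [Submodule.span_image, hG', Submodule.map_comap_eq, Submodule.range_subtype]
    exact inf_eq_right.mpr hN
  · have hsoctop : socle R (R ⧸ loewy R R γ) = ⊤ := by
      rw [eq_top_iff]
      rintro x -
      obtain ⟨y, rfl⟩ := Submodule.mkQ_surjective _ x
      have hy : y ∈ loewy R R (γ + 1) := by rw [hlen]; trivial
      rw [loewy_succ] at hy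
      exact hy
    haveI : IsSemisimpleModule R (R ⧸ loewy R R γ) := by
      refine IsSemisimpleModule.of_sSup_simples_eq_top ?_
      simp_rw [isSimpleModule_iff_isAtom]
      exact hsoctop
    have hcyc : span R {(loewy R R γ).mkQ 1} = (⊤ : Submodule R (R ⧸ loewy R R γ)) := by
      rw [eq_top_iff]
      rintro x -
      obtain ⟨y, rfl⟩ := Submodule.mkQ_surjective _ x
      exact mem_span_singleton.mpr ⟨y, by rw [← map_smul, smul_eq_mul, mul_one]⟩
    exact cg_submodule_of_semisimple (Set.countable_singleton _) hcyc N

end Layers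

/-- A semiartinian von Neumann regular ring with primitive factors artinian, of countable Loewy
length, whose intermediate layers are countably generated, is hereditary: every ideal is
projective. -/
theorem hereditary_of_countable_layers
    (R : Type u) [Ring R] (hsa : IsSemiartinianRing R)
    (hvnr : IsVonNeumannRegularRing R) (hpfa : HasPrimitiveFactorsArtinian R)
    (σ : Ordinal.{u}) (hcard : σ.card ≤ Cardinal.aleph0)
    (hlen : loewy R R (σ + 1) = ⊤)
    (hlayers : ∀ α : Ordinal.{u}, 0 < α → α < σ →
      ∃ S : Set (loewyLayer R α), S.Countable ∧ Submodule.span R S = ⊤) :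
    ∀ I : Submodule R R, Module.Projective R I := by
  intro I
  classical
  have hS1 : loewy R R 1 = sSup {T : Submodule R R | IsAtom T} := loewy_one_eq_sSup_atoms
  -- Step 1: `I` is countably generated modulo `I ⊓ S 1`.
  have main : ∀ β : Ordinal.{u}, β ≤ σ + 1 →
      ∃ G : Set R, G.Countable ∧ G ⊆ (I : Set R) ∧
        I ⊓ loewy R R β ≤ (I ⊓ loewy R R 1) ⊔ span R G := by
    intro β
    induction β using Ordinal.induction with
    | h β IH =>
      intro hβσ
      rcases le_or_gt β 1 with hβ1 | hβ1
      · refine ⟨∅, Set.countable_empty, Set.empty_subset _, ?_⟩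
        rw [Submodule.span_empty]
        exact le_sup_of_le_left (inf_le_inf_left I (loewy_mono R hβ1))
      rcases Ordinal.zero_or_succ_or_isSuccLimit β with rfl | ⟨γ, rfl⟩ | hlim
      · exact absurd hβ1 (by simp)
      · -- successor case
        rw [← Ordinal.add_one_eq_succ] at hβσ hβ1 ⊢
        have hγlt : γ < γ + 1 := by
          rw [Ordinal.add_one_eq_succ]; exact Order.lt_succ γ
        obtain ⟨G₀, hG₀c, hG₀I, hG₀⟩ :=
          IH γ (Order.lt_succ γ) ((le_of_lt hγlt).trans hβσ)
        have hγ0 : 0 < γ := by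
          have h1γ : 1 ≤ γ := by
            rw [Ordinal.add_one_eq_succ] at hβ1
            exact Order.lt_succ_iff.mp hβ1
          exact lt_of_lt_of_le zero_lt_one h1γ
        rcases le_or_gt γ σ with hγσ | hσγ
        · -- layer argument
          set K := (I ⊓ loewy R R (γ + 1)).map (loewy R R γ).mkQ with hK
          have hKle : K ≤ loewyLayer R γ := Submodule.map_mono inf_le_right
          obtain ⟨Gbar, hGbarc, hGbar⟩ := layer_submodule_cg σ hlen hlayers hγ0 hγσ K hKle
          have hlift : ∀ y : Gbar, ∃ x : R,
              x ∈ I ⊓ loewy R R (γ + 1) ∧ (loewy R R γ).mkQ x = y := by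
            rintro ⟨y, hy⟩
            have hyK : y ∈ K := hGbar ▸ subset_span hy
            obtain ⟨x, hx, hxy⟩ := hyK
            exact ⟨x, hx, hxy⟩
          choose lift hlift1 hlift2 using hlift
          haveI : Countable ↥Gbar := hGbarc.to_subtype
          refine ⟨G₀ ∪ Set.range lift, hG₀c.union (Set.countable_range lift), ?_, ?_⟩
          · refine Set.union_subset hG₀I ?_
            rintro x ⟨y, rfl⟩
            exact (hlift1 y).1
          · rintro x ⟨hxI, hxS⟩
            have hmkx : (loewy R R γ).mkQ x ∈ K := ⟨x, ⟨hxI, hxS⟩, rfl⟩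
            rw [← hGbar] at hmkx
            have hspan2 : span R Gbar ≤
                (span R (Set.range lift)).map (loewy R R γ).mkQ := by
              rw [Submodule.span_le]
              intro y hy
              exact ⟨lift ⟨y, hy⟩, subset_span (Set.mem_range_self _), hlift2 ⟨y, hy⟩⟩
            obtain ⟨z, hz, hzx⟩ := hspan2 hmkx
            have hzI : z ∈ I := by
              have : span R (Set.range lift) ≤ I := by
                rw [Submodule.span_le]
                rintro w ⟨y, rfl⟩
                exact (hlift1 y).1
              exact this hz
            have hxz : x - z ∈ I ⊓ loewy R R γ := by
              refine ⟨sub_mem hxI hzI, ?_⟩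
              have h0 : (loewy R R γ).mkQ (x - z) = 0 := by rw [map_sub, hzx, sub_self]
              rwa [Submodule.mkQ_apply, Submodule.Quotient.mk_eq_zero] at h0
            have hx0 : x - z ∈ (I ⊓ loewy R R 1) ⊔ span R G₀ := hG₀ hxz
            have hzin : z ∈ span R (G₀ ∪ Set.range lift) :=
              span_mono Set.subset_union_right hz
            have hx0' : x - z ∈ (I ⊓ loewy R R 1) ⊔ span R (G₀ ∪ Set.range lift) := by
              refine (sup_le_sup_left (span_mono (R := R) (M := R) Set.subset_union_left) (I ⊓ loewy R R 1) : _) hx0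
            have := add_mem hx0'
              (le_sup_right (α := Submodule R R)
                (a := I ⊓ loewy R R 1) hzin)
            simpa using this
        · -- `S γ` is already everything
          have hσ1γ : σ + 1 ≤ γ := by
            rw [Ordinal.add_one_eq_succ]
            exact Order.succ_le_of_lt hσγ
          have hγtop : loewy R R γ = ⊤ := loewy_eq_top_of_le R hlen hσ1γ
          have hγ1top : loewy R R (γ + 1) = ⊤ :=
            loewy_eq_top_of_le R hlen (hσ1γ.trans (le_of_lt hγlt))
          refine ⟨G₀, hG₀c, hG₀I, ?_⟩
          rw [hγ1top, ← hγtop]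
          exact hG₀
      · -- limit case
        have hchoice : ∀ γ : Ordinal.{u}, ∃ G : Set R,
            γ < β → G.Countable ∧ G ⊆ (I : Set R) ∧
              I ⊓ loewy R R γ ≤ (I ⊓ loewy R R 1) ⊔ span R G := by
          intro γ
          by_cases h : γ < β
          · obtain ⟨G, h1, h2, h3⟩ := IH γ h ((le_of_lt h).trans hβσ)
            exact ⟨G, fun _ => ⟨h1, h2, h3⟩⟩
          · exact ⟨∅, fun hc => absurd hc h⟩
        choose Gf hGf using hchoice
        have hIio : (Set.Iio β).Countable := by
          rw [← Cardinal.le_aleph0_iff_set_countable]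
          have hβcard : β.card ≤ Cardinal.aleph0 := by
            refine le_trans (Ordinal.card_le_card hβσ) ?_
            rw [Ordinal.add_one_eq_succ, Ordinal.card_succ]
            calc σ.card + 1 ≤ Cardinal.aleph0 + 1 := add_le_add_left hcard 1
              _ = Cardinal.aleph0 := by
                  rw [Cardinal.add_one_of_aleph0_le le_rfl]
          calc Cardinal.mk (Set.Iio β) = Cardinal.lift.{u + 1} β.card :=
                Ordinal.mk_Iio_ordinal β
            _ ≤ Cardinal.lift.{u + 1} Cardinal.aleph0 := Cardinal.lift_le.mpr hβcard
            _ = Cardinal.aleph0 := Cardinal.lift_aleph0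
        refine ⟨⋃ γ ∈ Set.Iio β, Gf γ, hIio.biUnion (fun γ hγ => (hGf γ hγ).1), ?_, ?_⟩
        · exact Set.iUnion₂_subset fun γ hγ => (hGf γ hγ).2.1
        · rintro x ⟨hxI, hxS⟩
          rw [loewy_limit R β hlim] at hxS
          have hfle : ∀ {b c : Ordinal.{u}}, b ≤ c → c < β →
              (⨆ (_ : b < β), loewy R R b) ≤ ⨆ (_ : c < β), loewy R R c := by
            intro b c hbc hcβ
            rw [iSup_pos hcβ]
            exact iSup_le fun _ => loewy_mono R hbc
          have hdir : Directed (· ≤ ·)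
              (fun b : Ordinal.{u} => ⨆ (_ : b < β), loewy R R b) := by
            intro b₁ b₂
            by_cases h₁ : b₁ < β
            · by_cases h₂ : b₂ < β
              · exact ⟨max b₁ b₂, hfle (le_max_left _ _) (max_lt h₁ h₂),
                  hfle (le_max_right _ _) (max_lt h₁ h₂)⟩
              · have h3 : (⨆ (_ : b₂ < β), loewy R R b₂) ≤
                    ⨆ (_ : b₁ < β), loewy R R b₁ := by
                  rw [iSup_neg h₂]; exact bot_le
                exact ⟨b₁, le_rfl, h3⟩
            · have h3 : (⨆ (_ : b₁ < β), loewy R R b₁) ≤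
                  ⨆ (_ : b₂ < β), loewy R R b₂ := by
                rw [iSup_neg h₁]; exact bot_le
              exact ⟨b₂, h3, le_rfl⟩
          obtain ⟨γ, hγmem⟩ := (Submodule.mem_iSup_of_directed _ hdir).mp hxS
          have hγmem' : x ∈ (⨆ (_ : γ < β), loewy R R γ) := hγmem
          by_cases hγβ : γ < β
          · rw [iSup_pos hγβ] at hγmem'
            have hle := (hGf γ hγβ).2.2 ⟨hxI, hγmem'⟩
            refine (sup_le_sup_left (span_mono (R := R) (M := R) ?_) (I ⊓ loewy R R 1) : _) hle
            exact Set.subset_biUnion_of_mem hγβ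
          · rw [iSup_neg hγβ] at hγmem'
            rw [Submodule.mem_bot] at hγmem'
            rw [hγmem']
            exact zero_mem _
  obtain ⟨G, hGc, hGI, hGle⟩ := main (σ + 1) le_rfl
  have hItop : I ⊓ loewy R R (σ + 1) = I := by rw [hlen, inf_top_eq]
  rw [hItop] at hGle
  -- Step 2: split `I` as a countably generated ideal plus a semisimple ideal.
  set A := I ⊓ loewy R R 1 with hA
  set C := span R G with hC
  have hCI : C ≤ I := span_le.mpr hGI
  have hAI : A ≤ I := inf_le_left
  have hAle : A ≤ sSup {T : Submodule R R | IsAtom T} := hS1 ▸ inf_le_right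
  haveI hssA : IsSemisimpleModule R ↥A := isSemisimple_of_le_sSup_atoms hAle
  obtain ⟨q, hq⟩ := exists_isCompl ((A ⊓ C).comap A.subtype)
  set A' := q.map A.subtype with hA'
  have hA'A : A' ≤ A := map_subtype_le A q
  have hmapcomap : ((A ⊓ C).comap A.subtype).map A.subtype = A ⊓ C := by
    rw [Submodule.map_comap_eq, Submodule.range_subtype]
    exact inf_eq_right.mpr (inf_le_left (b := C))
  have hACdisj : (A ⊓ C) ⊓ A' = ⊥ := by
    rw [← hmapcomap, hA', ← Submodule.map_inf _ (injective_subtype A),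
      disjoint_iff.mp hq.disjoint, Submodule.map_bot]
  have hACsup : (A ⊓ C) ⊔ A' = A := by
    rw [← hmapcomap, hA', ← Submodule.map_sup, codisjoint_iff.mp hq.codisjoint,
      Submodule.map_subtype_top]
  have hIeq : C ⊔ A' = I := by
    apply le_antisymm (sup_le hCI (hA'A.trans hAI))
    intro x hx
    have hx2 : x ∈ A ⊔ C := hGle hx
    rw [← hACsup] at hx2
    have : ((A ⊓ C) ⊔ A') ⊔ C ≤ C ⊔ A' := by
      refine sup_le (sup_le ?_ le_sup_right) le_sup_left
      exact le_trans inf_le_right le_sup_left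
    exact this hx2
  have hdisj : C ⊓ A' = ⊥ := by
    have hle : C ⊓ A' ≤ (A ⊓ C) ⊓ A' := by
      rintro x ⟨hxC, hxA'⟩
      exact ⟨⟨hA'A hxA', hxC⟩, hxA'⟩
    rw [← le_bot_iff]
    exact hACdisj ▸ hle
  -- `C` is projective
  have hCproj : Module.Projective R ↥C := by
    have hne : (insert (0 : R) G).Nonempty := ⟨0, Set.mem_insert 0 G⟩
    obtain ⟨g, hg⟩ := Set.Countable.exists_eq_range (hGc.insert 0) hne
    refine projective_of_range_span hvnr C g ?_
    rw [← hg, Submodule.span_insert_zero]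
  -- `A'` is projective
  have hA'proj : Module.Projective R ↥A' := by
    haveI : IsSemisimpleModule R ↥A' := isSemisimple_of_le_sSup_atoms (hA'A.trans hAle)
    refine projective_of_semisimple_atoms _ fun T hT => ?_
    have hatom : IsAtom (T.map A'.subtype) := isAtom_map_subtype hT
    haveI := atom_projective hvnr hatom
    exact Module.Projective.of_equiv
      (Submodule.equivMapOfInjective A'.subtype (injective_subtype A') T).symm
  -- conclude
  set p₁ := C.comap I.subtype with hp₁
  set p₂ := A'.comap I.subtype with hp₂
  have hmap₁ : p₁.map I.subtype = C := by
    rw [hp₁, Submodule.map_comap_eq, Submodule.range_subtype]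
    exact inf_eq_right.mpr hCI
  have hmap₂ : p₂.map I.subtype = A' := by
    rw [hp₂, Submodule.map_comap_eq, Submodule.range_subtype]
    exact inf_eq_right.mpr (hA'A.trans hAI)
  have hinj := Submodule.map_injective_of_injective (injective_subtype I)
  have hcompl : IsCompl p₁ p₂ := by
    constructor
    · rw [disjoint_iff]
      apply hinj
      rw [Submodule.map_inf _ (injective_subtype I), hmap₁, hmap₂, hdisj, Submodule.map_bot]
    · rw [codisjoint_iff]
      apply hinj
      rw [Submodule.map_sup, hmap₁, hmap₂, hIeq, Submodule.map_subtype_top]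
  haveI := hCproj
  haveI := hA'proj
  haveI : Module.Projective R ↥p₁ :=
    Module.Projective.of_equiv (Submodule.comapSubtypeEquivOfLe hCI).symm
  haveI : Module.Projective R ↥p₂ :=
    Module.Projective.of_equiv (Submodule.comapSubtypeEquivOfLe (hA'A.trans hAI)).symm
  exact Module.Projective.of_equiv (Submodule.prodEquivOfIsCompl p₁ p₂ hcompl)
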